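/- Let C be a set of real n×n matrices closed under multiplication by nonnegative scalars. Suppose that O₁ is the maximum (attained) of 𝟏ᵀA𝟏 over all positive semidefinite A ∈ C with tr A = 1, that O₂ is the maximum (attained) of tr A over all symmetric A ∈ C for which R(A) is positive semidefinite, and that the first maximum is attained by some matrix A with diag(A) = c·(A·𝟏) for some real c. Then O₁ = O₂. -/

import Mathlib

open Matrix

/-- For a real `n×n` matrix `A` with diagonal vector `a = diag(A)`, the bordered matrix
`R(A) = [[1, aᵀ],[a, A]]`. -/
def Rmat {n : ℕ} (A : Matrix (Fin n) (Fin n) ℝ) :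
    Matrix (Fin 1 ⊕ Fin n) (Fin 1 ⊕ Fin n) ℝ :=
  Matrix.fromBlocks
    (Matrix.of fun _ _ => (1 : ℝ))
    (Matrix.of fun _ j => A.diag j)
    (Matrix.of fun i _ => A.diag i)
    A

section Helpers
variable {n : ℕ}

private lemma cs6 {A : Matrix (Fin n) (Fin n) ℝ} (hA : A.PosSemidef) (x y : Fin n → ℝ) :
    (x ⬝ᵥ A *ᵥ y)^2 ≤ (x ⬝ᵥ A *ᵥ x) * (y ⬝ᵥ A *ᵥ y) := by
  have hsym : ∀ u v : Fin n → ℝ, u ⬝ᵥ A *ᵥ v = v ⬝ᵥ A *ᵥ u := by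
    intro u v
    have hH : Aᵀ = A := by
      have := hA.1; rwa [Matrix.IsHermitian, conjTranspose_eq_transpose_of_trivial] at this
    rw [dotProduct_mulVec, ← mulVec_transpose, hH, dotProduct_comm]
  have key : ∀ t : ℝ, 0 ≤ (y ⬝ᵥ A *ᵥ y) * (t * t) + (2*(x ⬝ᵥ A *ᵥ y)) * t + (x ⬝ᵥ A *ᵥ x) := by
    intro t
    have h0 := hA.dotProduct_mulVec_nonneg (x + t • y)
    simp only [star_trivial, mulVec_add, mulVec_smul, dotProduct_add, add_dotProduct,
      dotProduct_smul, smul_dotProduct, smul_eq_mul] at h0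
    rw [hsym y x] at h0
    nlinarith [h0]
  have hd := discrim_le_zero key
  rw [discrim] at hd
  nlinarith [hd]

end Helpers

section Helpers2
variable {n : ℕ}

private lemma rform6 (B : Matrix (Fin n) (Fin n) ℝ) (t : ℝ) (y : Fin n → ℝ) :
    Sum.elim (fun _ => t) y ⬝ᵥ Rmat B *ᵥ Sum.elim (fun _ => t) y
      = t^2 + 2*t*(B.diag ⬝ᵥ y) + y ⬝ᵥ B *ᵥ y := by
  rw [Rmat, fromBlocks_mulVec, sumElim_dotProduct_sumElim]
  simp only [mulVec, dotProduct, Fin.sum_univ_one, diag, Matrix.of_apply, Pi.add_apply,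
    Function.comp, Sum.elim_inl, Sum.elim_inr,
    mul_add, add_mul, Finset.sum_add_distrib, Finset.mul_sum, Finset.sum_mul]
  have h : ∑ i, t * (B i i * y i) + ∑ i, y i * (B i i * t) = ∑ i, 2 * t * (B i i * y i) := by
    rw [← Finset.sum_add_distrib]; exact Finset.sum_congr rfl fun i _ => by ring
  rw [← h]; ring

private lemma relim6 (x : Fin 1 ⊕ Fin n → ℝ) :
    x = Sum.elim (fun _ => x (Sum.inl 0)) (x ∘ Sum.inr) := by
  funext i
  cases i with
  | inl i => simp [Subsingleton.elim i 0]
  | inr j => simp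

private lemma rherm6 {B : Matrix (Fin n) (Fin n) ℝ} (hB : B.IsSymm) : (Rmat B).IsHermitian := by
  unfold Matrix.IsHermitian
  ext i j
  cases i <;> cases j <;>
    simp [Rmat, conjTranspose_apply, fromBlocks, hB.apply]

end Helpers2

/-- let `C` be a cone of real `n×n` matrices, let
`O₁ = max { 𝟙ᵀA𝟙 : A ∈ C, A ⪰ 0, tr A = 1 }` and
`O₂ = max { tr A : A ∈ C, A symmetric, R(A) ⪰ 0 }` (both attained), and suppose the first
maximum is attained by some `A` with `diag(A) = c·(A𝟙)`. Then `O₁ = O₂`. -/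
theorem statement6 (n : ℕ) (C : Set (Matrix (Fin n) (Fin n) ℝ))
    (hcone : ∀ c : ℝ, 0 ≤ c → ∀ A ∈ C, c • A ∈ C)
    (O₁ O₂ : ℝ)
    (hO₁ : IsGreatest {y | ∃ A ∈ C, A.PosSemidef ∧ A.trace = 1 ∧ y = ∑ i, ∑ j, A i j} O₁)
    (hO₂ : IsGreatest {y | ∃ A ∈ C, A.IsSymm ∧ (Rmat A).PosSemidef ∧ y = A.trace} O₂)
    (hattain : ∃ A ∈ C, A.PosSemidef ∧ A.trace = 1 ∧ (∑ i, ∑ j, A i j) = O₁ ∧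
      ∃ c : ℝ, A.diag = c • (A *ᵥ fun _ => (1 : ℝ))) :
    O₁ = O₂ := by
  set one : Fin n → ℝ := fun _ => (1 : ℝ) with hone
  have hform : ∀ A : Matrix (Fin n) (Fin n) ℝ, one ⬝ᵥ A *ᵥ one = ∑ i, ∑ j, A i j := by
    intro A; simp [dotProduct, mulVec, hone]
  have hdiagdot : ∀ B : Matrix (Fin n) (Fin n) ℝ, B.diag ⬝ᵥ one = B.trace := by
    intro B; simp [dotProduct, trace, diag, hone]
  obtain ⟨A, hAC, hApsd, htr, hsum, c, hdiag⟩ := hattain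
  have hAsym : Aᵀ = A := by
    have := hApsd.1; rwa [Matrix.IsHermitian, conjTranspose_eq_transpose_of_trivial] at this
  have hsymA : ∀ u v : Fin n → ℝ, u ⬝ᵥ A *ᵥ v = v ⬝ᵥ A *ᵥ u := by
    intro u v
    rw [dotProduct_mulVec, ← mulVec_transpose, hAsym, dotProduct_comm]
  have hsumA : one ⬝ᵥ A *ᵥ one = O₁ := by rw [hform]; exact hsum
  -- c * O₁ = 1
  have hco : c * O₁ = 1 := by
    have h1 : A.trace = A.diag ⬝ᵥ one := (hdiagdot A).symm
    rw [hdiag] at h1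
    have h2 : (c • (A *ᵥ one)) ⬝ᵥ one = c * (one ⬝ᵥ A *ᵥ one) := by
      rw [smul_dotProduct, smul_eq_mul, dotProduct_comm]
    rw [h2, hsumA, htr] at h1
    linarith [h1]
  have hO₁nonneg : 0 ≤ O₁ := by
    rw [← hsumA]
    have := hApsd.dotProduct_mulVec_nonneg one
    simpa using this
  have hO₁pos : 0 < O₁ := by
    rcases lt_or_eq_of_le hO₁nonneg with h | h
    · exact h
    · exfalso; rw [← h] at hco; simp at hco
  -- O₁ ≤ O₂
  have hle : O₁ ≤ O₂ := by
    apply hO₂.2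
    refine ⟨O₁ • A, hcone O₁ hO₁nonneg A hAC, ?_, ?_, ?_⟩
    · rw [Matrix.IsSymm, transpose_smul, hAsym]
    · refine PosSemidef.of_dotProduct_mulVec_nonneg ?_ ?_
      · apply rherm6
        rw [Matrix.IsSymm, transpose_smul, hAsym]
      · intro x
        rw [star_trivial, relim6 x, rform6]
        set t := x (Sum.inl 0)
        set y := x ∘ Sum.inr
        have hdB : (O₁ • A).diag = A *ᵥ one := by
          rw [diag_smul, hdiag, smul_smul, mul_comm O₁ c, hco, one_smul]
        rw [hdB]
        have hs : (A *ᵥ one) ⬝ᵥ y = one ⬝ᵥ A *ᵥ y := by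
          rw [dotProduct_comm, hsymA]
        rw [hs]
        have hq : y ⬝ᵥ (O₁ • A) *ᵥ y = O₁ * (y ⬝ᵥ A *ᵥ y) := by
          rw [smul_mulVec, dotProduct_smul, smul_eq_mul]
        rw [hq]
        have hcs := cs6 hApsd one y
        rw [hsumA] at hcs
        nlinarith [sq_nonneg (t + one ⬝ᵥ A *ᵥ y), hcs]
    · rw [trace_smul, htr]; simp
  -- O₂ ≤ O₁
  have hge : O₂ ≤ O₁ := by
    obtain ⟨B, hBC, hBsym, hRpsd, hO₂eq⟩ := hO₂.1
    have hBpsd : B.PosSemidef := by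
      refine PosSemidef.of_dotProduct_mulVec_nonneg ?_ ?_
      · rw [Matrix.IsHermitian, conjTranspose_eq_transpose_of_trivial]; exact hBsym
      · intro y
        have h0 := hRpsd.dotProduct_mulVec_nonneg (Sum.elim (fun _ => (0:ℝ)) y)
        rw [star_trivial, rform6] at h0
        simpa using h0
    have htrsq : B.trace ^ 2 ≤ one ⬝ᵥ B *ᵥ one := by
      have key : ∀ t : ℝ, 0 ≤ 1 * (t * t) + (2 * B.trace) * t + one ⬝ᵥ B *ᵥ one := by
        intro t
        have h0 := hRpsd.dotProduct_mulVec_nonneg (Sum.elim (fun _ => t) one)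
        rw [star_trivial, rform6, hdiagdot] at h0
        nlinarith [h0]
      have hd := discrim_le_zero key
      rw [discrim] at hd
      nlinarith [hd]
    rcases le_or_gt B.trace 0 with h | h
    · rw [hO₂eq]; linarith
    · have hA' : ((B.trace)⁻¹ • B) ∈ C := hcone _ (inv_nonneg.mpr h.le) B hBC
      have hA'psd : ((B.trace)⁻¹ • B).PosSemidef := by
        refine PosSemidef.of_dotProduct_mulVec_nonneg ?_ ?_
        · rw [Matrix.IsHermitian, conjTranspose_eq_transpose_of_trivial, transpose_smul, hBsym]
        · intro y
          rw [star_trivial, smul_mulVec, dotProduct_smul, smul_eq_mul]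
          have := hBpsd.dotProduct_mulVec_nonneg y
          rw [star_trivial] at this
          positivity
      have hA'tr : ((B.trace)⁻¹ • B).trace = 1 := by
        rw [trace_smul, smul_eq_mul, inv_mul_cancel₀ h.ne']
      have hmem : (∑ i, ∑ j, ((B.trace)⁻¹ • B) i j) ∈
          {y | ∃ A ∈ C, A.PosSemidef ∧ A.trace = 1 ∧ y = ∑ i, ∑ j, A i j} :=
        ⟨_, hA', hA'psd, hA'tr, rfl⟩
      have hle' := hO₁.2 hmem
      have hsum' : (∑ i, ∑ j, ((B.trace)⁻¹ • B) i j) = (B.trace)⁻¹ * (one ⬝ᵥ B *ᵥ one) := by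
        rw [← hform, smul_mulVec, dotProduct_smul, smul_eq_mul]
      rw [hsum'] at hle'
      have : B.trace ≤ (B.trace)⁻¹ * (one ⬝ᵥ B *ᵥ one) := by
        have h3 : (B.trace)⁻¹ * B.trace ^ 2 = B.trace := by
          rw [sq, ← mul_assoc, inv_mul_cancel₀ h.ne', one_mul]
        have h4 := mul_le_mul_of_nonneg_left htrsq (inv_nonneg.mpr h.le)
        rw [h3] at h4
        exact h4
      rw [hO₂eq]; linarith
  linarith
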